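/- arXiv:0908.4538 — 5 statements merged into one kernel-verified Lean document; each statement's English description precedes it below -/
import Mathlib

section
/- Let U : (0,∞) → ℝ be a utility function with lim_{x→0+} U′(x) = +∞ and lim_{x→∞} U′(x) = 0. For each integer n ≥ 2 let x̲ⁿ, x̄ⁿ ∈ (0,∞) be the unique points with U′(x̲ⁿ) = n and U′(x̄ⁿ) = 1/n, define ξⁿ(x) = x̲ⁿ − x + n for 0 ≤ x ≤ x̲ⁿ, ξⁿ(x) = U′(x) for x̲ⁿ ≤ x ≤ x̄ⁿ, ξⁿ(x) = 1/n for x > x̄ⁿ, and set Uₙ(x) = U(x̲ⁿ) − (1/2)(x̲ⁿ)² − n·x̲ⁿ + ∫₀^{x∧x̄ⁿ} ξⁿ(y) dy for x ≥ 0. Then each Uₙ is a good truncated utility function with effective domain [0, x̄ⁿ], Uₙ(x) = U(x) for all x ∈ [x̲ⁿ, x̄ⁿ], and for every x > 0 one has Uₙ(x) → U(x) as n → ∞. -/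
open Set Filter

/- STATEMENT 2: Approximation of a utility function `U` (with `U′(0+) = +∞`,
`U′(∞) = 0`) by good truncated utility functions `Uₙ` with effective domains
`[0, x̄ⁿ]`, where `U′(x̲ⁿ) = n`, `U′(x̄ⁿ) = 1/n`,
`ξⁿ(x) = x̲ⁿ − x + n` on `[0, x̲ⁿ]`, `= U′(x)` on `[x̲ⁿ, x̄ⁿ]`, `= 1/n` beyond,
and `Uₙ(x) = U(x̲ⁿ) − ½(x̲ⁿ)² − n·x̲ⁿ + ∫₀^{x∧x̄ⁿ} ξⁿ(y) dy`. Then each `Uₙ` is a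
good truncated utility function with effective domain `[0, x̄ⁿ]`, `Uₙ = U` on
`[x̲ⁿ, x̄ⁿ]`, and `Uₙ(x) → U(x)` for every `x > 0`. -/
theorem stmt_2
    (U U' : ℝ → ℝ)
    -- U is a utility function on (0,∞):
    (hUderiv : ∀ x ∈ Ioi (0 : ℝ), HasDerivAt U (U' x) x)
    (hU'cont : ContinuousOn U' (Ioi 0))
    (hU'pos : ∀ x ∈ Ioi (0 : ℝ), 0 < U' x)
    (hU'anti : StrictAntiOn U' (Ioi 0))
    (hU'zero : Tendsto U' (nhdsWithin 0 (Ioi 0)) atTop)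
    (hU'top : Tendsto U' atTop (nhds 0))
    -- the points x̲ⁿ and x̄ⁿ:
    (xl xu : ℕ → ℝ)
    (hxl : ∀ n : ℕ, 2 ≤ n → 0 < xl n ∧ U' (xl n) = (n : ℝ))
    (hxu : ∀ n : ℕ, 2 ≤ n → 0 < xu n ∧ U' (xu n) = 1 / (n : ℝ))
    -- the functions ξⁿ and Uₙ:
    (ξ : ℕ → ℝ → ℝ)
    (hξ : ∀ (n : ℕ) (x : ℝ), ξ n x =
      if x ≤ xl n then xl n - x + (n : ℝ)
      else if x ≤ xu n then U' x else 1 / (n : ℝ))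
    (UN : ℕ → ℝ → ℝ)
    (hUN : ∀ (n : ℕ) (x : ℝ), UN n x =
      U (xl n) - (1 / 2) * (xl n) ^ 2 - (n : ℝ) * xl n
        + ∫ y in (0 : ℝ)..(min x (xu n)), ξ n y) :
    -- each Uₙ is a good truncated utility function with effective domain [0, x̄ⁿ]:
    (∀ n : ℕ, 2 ≤ n →
      ContinuousOn (UN n) (Ici 0) ∧
      (∀ x ∈ Ioo 0 (xu n), HasDerivAt (UN n) (ξ n x) x) ∧
      ContinuousOn (ξ n) (Ioo 0 (xu n)) ∧
      (∀ x ∈ Ioo 0 (xu n), 0 < ξ n x) ∧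
      StrictAntiOn (ξ n) (Ioo 0 (xu n)) ∧
      Tendsto (ξ n) (nhdsWithin 0 (Ioo 0 (xu n))) (nhds (xl n + (n : ℝ))) ∧
      (∀ x, xu n ≤ x → UN n x = UN n (xu n))) ∧
    -- Uₙ agrees with U on [x̲ⁿ, x̄ⁿ]:
    (∀ n : ℕ, 2 ≤ n → ∀ x ∈ Icc (xl n) (xu n), UN n x = U x) ∧
    -- pointwise convergence Uₙ(x) → U(x) for x > 0:
    (∀ x : ℝ, 0 < x → Tendsto (fun n => UN n x) atTop (nhds (U x))) := by
  -- basic facts for each n ≥ 2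
  have base : ∀ n : ℕ, 2 ≤ n → xl n < xu n ∧ Continuous (ξ n) := by
    intro n hn
    obtain ⟨hl, hl'⟩ := hxl n hn
    obtain ⟨hu, hu'⟩ := hxu n hn
    have hn2 : (2 : ℝ) ≤ (n : ℝ) := by exact_mod_cast hn
    have hnpos : (0 : ℝ) < n := by linarith
    have hinv : 1 / (n : ℝ) ≤ 1 := by
      rw [div_le_one hnpos]; linarith
    have hlu : xl n < xu n := by
      rcases lt_trichotomy (xl n) (xu n) with h | h | h
      · exact h
      · exfalso
        rw [h, hu'] at hl'
        linarith
      · exfalso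
        have := hU'anti (mem_Ioi.2 hu) (mem_Ioi.2 hl) h
        rw [hl', hu'] at this
        linarith
    refine ⟨hlu, ?_⟩
    have hWc : Continuous (fun x : ℝ => U' (min (max x (xl n)) (xu n))) := by
      apply hU'cont.comp_continuous
      · exact (continuous_id.max continuous_const).min continuous_const
      · intro x
        exact mem_Ioi.2 (lt_min (hl.trans_le (le_max_right _ _)) hu)
    have heq : ξ n = fun x => if x ≤ xl n then xl n - x + (n : ℝ)
        else U' (min (max x (xl n)) (xu n)) := by
      funext x
      rw [hξ]
      rcases le_or_gt x (xl n) with h1 | h1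
      · rw [if_pos h1, if_pos h1]
      · rw [if_neg h1.not_ge, if_neg h1.not_ge, max_eq_left h1.le]
        rcases le_or_gt x (xu n) with h2 | h2
        · rw [if_pos h2, min_eq_left h2]
        · rw [if_neg h2.not_ge, min_eq_right h2.le, hu']
    rw [heq]
    apply Continuous.if_le ((continuous_const.sub continuous_id).add continuous_const)
      hWc continuous_id continuous_const
    intro x hx
    simp only [id] at hx
    rw [hx, max_self, min_eq_left hlu.le, hl']
    simp
  -- part 2 first (it is used in part 3)
  have part2 : ∀ n : ℕ, 2 ≤ n → ∀ x ∈ Icc (xl n) (xu n), UN n x = U x := by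
    intro n hn x hx
    obtain ⟨hlu, hcont⟩ := base n hn
    obtain ⟨hl, hl'⟩ := hxl n hn
    rw [hUN, min_eq_left hx.2]
    have hsplit : (∫ y in (0 : ℝ)..(xl n), ξ n y) + (∫ y in (xl n)..x, ξ n y)
        = ∫ y in (0 : ℝ)..x, ξ n y :=
      intervalIntegral.integral_add_adjacent_intervals
        (hcont.intervalIntegrable _ _) (hcont.intervalIntegrable _ _)
    have hI1 : (∫ y in (0 : ℝ)..(xl n), ξ n y) = (1 / 2) * (xl n) ^ 2 + (n : ℝ) * xl n := by
      have hc : (∫ y in (0 : ℝ)..(xl n), ξ n y)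
          = ∫ y in (0 : ℝ)..(xl n), (xl n - y + (n : ℝ)) := by
        apply intervalIntegral.integral_congr
        intro y hy
        rw [uIcc_of_le hl.le] at hy
        rw [hξ, if_pos hy.2]
      rw [hc]
      have hder : ∀ y ∈ uIcc (0 : ℝ) (xl n),
          HasDerivAt (fun t => (xl n + (n : ℝ)) * t - t ^ 2 / 2) (xl n - y + (n : ℝ)) y := by
        intro y _
        have h1 := (hasDerivAt_id y).const_mul (xl n + (n : ℝ))
        have h2 := (hasDerivAt_pow 2 y).div_const 2
        convert h1.sub h2 using 1
        rfl
        rfl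
        · funext t; simp only [Pi.sub_apply, id]
        · rw [show (2:ℕ) - 1 = 1 from rfl]; push_cast; ring
      rw [intervalIntegral.integral_eq_sub_of_hasDerivAt hder
        (((continuous_const.sub continuous_id).add continuous_const).intervalIntegrable _ _)]
      ring
    have hI2 : (∫ y in (xl n)..x, ξ n y) = U x - U (xl n) := by
      have hc : (∫ y in (xl n)..x, ξ n y) = ∫ y in (xl n)..x, U' y := by
        apply intervalIntegral.integral_congr
        intro y hy
        rw [uIcc_of_le hx.1] at hy
        rw [hξ]
        rcases le_or_gt y (xl n) with h | h
        · have hyl : y = xl n := le_antisymm h hy.1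
          rw [if_pos h, hyl, hl']
          ring
        · rw [if_neg h.not_ge, if_pos (hy.2.trans hx.2)]
      rw [hc]
      apply intervalIntegral.integral_eq_sub_of_hasDerivAt
      · intro y hy
        rw [uIcc_of_le hx.1] at hy
        exact hUderiv y (mem_Ioi.2 (lt_of_lt_of_le hl hy.1))
      · apply ContinuousOn.intervalIntegrable
        apply hU'cont.mono
        rw [uIcc_of_le hx.1]
        intro y hy
        exact mem_Ioi.2 (lt_of_lt_of_le hl hy.1)
    rw [← hsplit, hI1, hI2]
    ring
  refine ⟨?_, part2, ?_⟩
  · -- part 1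
    intro n hn
    obtain ⟨hlu, hcont⟩ := base n hn
    obtain ⟨hl, hl'⟩ := hxl n hn
    obtain ⟨hu, hu'⟩ := hxu n hn
    have hn2 : (2 : ℝ) ≤ (n : ℝ) := by exact_mod_cast hn
    have hFder : ∀ x : ℝ, HasDerivAt (fun t => ∫ y in (0 : ℝ)..t, ξ n y) (ξ n x) x := by
      intro x
      exact intervalIntegral.integral_hasDerivAt_right (hcont.intervalIntegrable _ _)
        hcont.stronglyMeasurable.stronglyMeasurableAtFilter hcont.continuousAt
    have hFdiff : Differentiable ℝ (fun t => ∫ y in (0 : ℝ)..t, ξ n y) :=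
      fun x => (hFder x).differentiableAt
    have hFcont : Continuous (fun t => ∫ y in (0 : ℝ)..t, ξ n y) := hFdiff.continuous
    refine ⟨?_, ?_, ?_, ?_, ?_, ?_, ?_⟩
    · -- continuity of UN n
      have hUNc : Continuous (UN n) := by
        have heq : UN n = fun x => U (xl n) - (1 / 2) * (xl n) ^ 2 - (n : ℝ) * xl n
            + ∫ y in (0 : ℝ)..(min x (xu n)), ξ n y := funext fun x => hUN n x
        rw [heq]
        exact continuous_const.add (hFcont.comp (continuous_id.min continuous_const))
      exact hUNc.continuousOn
    · -- derivative of UN n on Ioo 0 (xu n)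
      intro x hx
      have hev : (fun y => U (xl n) - (1 / 2) * (xl n) ^ 2 - (n : ℝ) * xl n
          + ∫ t in (0 : ℝ)..y, ξ n t) =ᶠ[nhds x] UN n := by
        filter_upwards [Iio_mem_nhds hx.2] with y hy
        rw [hUN, min_eq_left (le_of_lt hy)]
      exact ((hFder x).const_add
        (U (xl n) - (1 / 2) * (xl n) ^ 2 - (n : ℝ) * xl n)).congr_of_eventuallyEq hev.symm
    · exact hcont.continuousOn
    · -- positivity of ξ n
      intro x hx
      rw [hξ]
      rcases le_or_gt x (xl n) with h | h
      · rw [if_pos h]; linarith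
      · rw [if_neg h.not_ge, if_pos hx.2.le]
        exact hU'pos x (mem_Ioi.2 hx.1)
    · -- strict antitonicity of ξ n
      intro a ha b hb hab
      rw [hξ, hξ]
      rcases le_or_gt b (xl n) with hb1 | hb1
      · rw [if_pos (hab.le.trans hb1), if_pos hb1]
        linarith
      · rw [if_neg hb1.not_ge, if_pos hb.2.le]
        rcases le_or_gt a (xl n) with ha1 | ha1
        · rw [if_pos ha1]
          have h2 : U' b < U' (xl n) :=
            hU'anti (mem_Ioi.2 hl) (mem_Ioi.2 hb.1) hb1
          rw [hl'] at h2
          linarith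
        · rw [if_neg ha1.not_ge, if_pos (hab.le.trans hb.2.le)]
          exact hU'anti (mem_Ioi.2 ha.1) (mem_Ioi.2 hb.1) hab
    · -- limit of ξ n at 0+
      have h0 : Tendsto (fun y : ℝ => xl n - y + (n : ℝ)) (nhds 0) (nhds (xl n + (n : ℝ))) := by
        have hc : Continuous fun y : ℝ => xl n - y + (n : ℝ) :=
          (continuous_const.sub continuous_id).add continuous_const
        simpa using hc.tendsto 0
      apply Tendsto.congr' _ (h0.mono_left nhdsWithin_le_nhds)
      filter_upwards [nhdsWithin_le_nhds (Iio_mem_nhds hl)] with y hy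
      rw [hξ, if_pos (le_of_lt hy)]
    · -- constancy beyond xu n
      intro x hx
      rw [hUN, hUN, min_eq_right hx, min_self]
  · -- part 3: pointwise convergence
    intro x hx
    have hc : Tendsto (fun n : ℕ => (n : ℝ)) atTop atTop := tendsto_natCast_atTop_atTop
    have hUx : 0 < U' x := hU'pos x (mem_Ioi.2 hx)
    have hev : ∀ᶠ n : ℕ in atTop, UN n x = U x := by
      filter_upwards [hc.eventually_ge_atTop (U' x), hc.eventually_ge_atTop (1 / U' x),
        eventually_ge_atTop 2] with n h1 h2 hn
      obtain ⟨hl, hl'⟩ := hxl n hn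
      obtain ⟨hu, hu'⟩ := hxu n hn
      have hxle : xl n ≤ x := by
        by_contra hcon
        push_neg at hcon
        have := hU'anti (mem_Ioi.2 hx) (mem_Ioi.2 hl) hcon
        rw [hl'] at this
        linarith
      have hxge : x ≤ xu n := by
        by_contra hcon
        push_neg at hcon
        have h3 := hU'anti (mem_Ioi.2 hu) (mem_Ioi.2 hx) hcon
        rw [hu'] at h3
        have hnpos : (0 : ℝ) < n := by
          have : (2 : ℝ) ≤ (n : ℝ) := by exact_mod_cast hn
          linarith
        have h9 : U' x * (n : ℝ) < 1 := by
          rw [lt_div_iff₀ hnpos] at h3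
          linarith
        have h10 : 1 ≤ (n : ℝ) * U' x := by
          rw [div_le_iff₀ hUx] at h2
          linarith
        nlinarith
      exact part2 n hn x ⟨hxle, hxge⟩
    exact Tendsto.congr' (by filter_upwards [hev] with n h using h.symm) tendsto_const_nhds
end

section
/- Let (Ω,𝓕,P) be a probability space, U a good truncated utility function with effective domain [0,K] and inverse marginal utility I, H : Ω → (0,∞) a random variable with E[H] < ∞, and y > 0. Then for every measurable B : Ω → [0,K] one has E[U(B) − y·H·B] ≤ E[U(I(yH)) − y·H·I(yH)], and equality holds if and only if B = I(yH) P-almost surely. (The maximization of the Lagrangian functional, inequality (6.18) and its equality condition.) -/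
open Set Filter MeasureTheory

lemma U'_lt_u0 {K : ℝ} {U' : ℝ → ℝ} {u0 : ℝ}
    (hU'anti : StrictAntiOn U' (Ioo 0 K))
    (hu0 : Tendsto U' (nhdsWithin 0 (Ioo 0 K)) (nhds u0))
    {c : ℝ} (hc : c ∈ Ioo 0 K) : U' c < u0 := by
  have hx : c / 2 ∈ Ioo 0 K := ⟨by linarith [hc.1], by linarith [hc.1, hc.2]⟩
  have h1 : U' c < U' (c / 2) := hU'anti hx hc (by linarith [hc.1])
  haveI : (nhdsWithin (0:ℝ) (Ioo 0 K)).NeBot := by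
    apply mem_closure_iff_nhdsWithin_neBot.mp
    rw [closure_Ioo (show (0:ℝ) ≠ K by linarith [hc.1, hc.2])]
    exact ⟨le_refl 0, by linarith [hc.1, hc.2]⟩
  have h2 : U' (c / 2) ≤ u0 := by
    refine ge_of_tendsto hu0 ?_
    have hio : Iio (c / 2) ∈ nhds (0 : ℝ) := Iio_mem_nhds (by linarith [hc.1])
    filter_upwards [mem_nhdsWithin_of_mem_nhds hio, self_mem_nhdsWithin] with z hz1 hz2
    exact (hU'anti hz2 hx hz1).le
  linarith

lemma uK_lt_U' {K : ℝ} {U' : ℝ → ℝ} {uK : ℝ}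
    (hU'anti : StrictAntiOn U' (Ioo 0 K))
    (huK : Tendsto U' (nhdsWithin K (Ioo 0 K)) (nhds uK))
    {c : ℝ} (hc : c ∈ Ioo 0 K) : uK < U' c := by
  have hx : (c + K) / 2 ∈ Ioo 0 K := ⟨by linarith [hc.1, hc.2], by linarith [hc.2]⟩
  have h1 : U' ((c + K) / 2) < U' c := hU'anti hc hx (by linarith [hc.2])
  haveI : (nhdsWithin K (Ioo 0 K)).NeBot := by
    apply mem_closure_iff_nhdsWithin_neBot.mp
    rw [closure_Ioo (show (0:ℝ) ≠ K by linarith [hc.1, hc.2])]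
    exact ⟨by linarith [hc.1, hc.2], le_refl K⟩
  have h2 : uK ≤ U' ((c + K) / 2) := by
    refine le_of_tendsto huK ?_
    have hio : Ioi ((c + K) / 2) ∈ nhds K := Ioi_mem_nhds (by linarith [hc.2])
    filter_upwards [mem_nhdsWithin_of_mem_nhds hio, self_mem_nhdsWithin] with z hz1 hz2
    exact (hU'anti hx hz2 hz1).le
  linarith

lemma key_strict {K : ℝ} (hK : 0 < K) {U U' I : ℝ → ℝ} {u0 uK : ℝ}
    (hUcont : ContinuousOn U (Ici 0))
    (hUderiv : ∀ x ∈ Ioo 0 K, HasDerivAt U (U' x) x)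
    (hU'anti : StrictAntiOn U' (Ioo 0 K))
    (hu0 : Tendsto U' (nhdsWithin 0 (Ioo 0 K)) (nhds u0))
    (huK : Tendsto U' (nhdsWithin K (Ioo 0 K)) (nhds uK))
    (hIrange : ∀ y, 0 < y → I y ∈ Icc 0 K)
    (hI0 : ∀ y, u0 ≤ y → I y = 0)
    (hIK : ∀ y, 0 < y → y ≤ uK → I y = K)
    (hIinv : ∀ y ∈ Ioo uK u0, U' (I y) = y)
    (hIanti : StrictAntiOn I (Icc uK u0))
    {η : ℝ} (hη : 0 < η) {b : ℝ} (hb : b ∈ Icc 0 K) (hne : b ≠ I η) :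
    U b - η * b < U (I η) - η * I η := by
  set i := I η with hi_def
  have hi : i ∈ Icc 0 K := hIrange η hη
  rcases lt_or_gt_of_ne hne with hlt | hgt
  · -- b < i
    obtain ⟨c, hc, hcslope⟩ := exists_hasDerivAt_eq_slope U U' hlt
      (hUcont.mono (fun x hx => le_trans hb.1 hx.1))
      (fun x hx => hUderiv x ⟨lt_of_le_of_lt hb.1 hx.1, lt_of_lt_of_le hx.2 hi.2⟩)
    have hcK : c ∈ Ioo 0 K := ⟨lt_of_le_of_lt hb.1 hc.1, lt_of_lt_of_le hc.2 hi.2⟩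
    have hslope : U i - U b = U' c * (i - b) := by
      rw [hcslope, div_mul_cancel₀ _ (sub_ne_zero.mpr hlt.ne')]
    have hkey : η < U' c := by
      rcases le_or_gt η uK with hηK | hKη
      · exact lt_of_le_of_lt hηK (uK_lt_U' hU'anti huK hcK)
      · rcases le_or_gt u0 η with hη0 | hη0
        · exfalso
          have h0 : i = 0 := hI0 η hη0
          have := hb.1; rw [h0] at hlt; linarith
        · have hipos : (0:ℝ) < i := lt_of_le_of_lt hb.1 hlt
          set η1 := max uK (η / 2) with hη1def
          have hη1pos : 0 < η1 := lt_of_lt_of_le (by linarith) (le_max_right _ _)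
          have hη1lt : η1 < η := max_lt hKη (by linarith)
          have hη1mem : η1 ∈ Icc uK u0 := ⟨le_max_left _ _, max_le (by linarith) (by linarith)⟩
          have hiK : i < K := by
            have h1 : I η < I η1 := hIanti hη1mem ⟨hKη.le, hη0.le⟩ hη1lt
            have h2 : I η1 ≤ K := (hIrange η1 hη1pos).2
            linarith
          have hiKmem : i ∈ Ioo 0 K := ⟨hipos, hiK⟩
          have hU'i : U' i = η := hIinv η ⟨hKη, hη0⟩
          have := hU'anti hcK hiKmem hc.2
          linarith
    nlinarith [mul_lt_mul_of_pos_right hkey (sub_pos.mpr hlt)]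
  · -- b > i
    obtain ⟨c, hc, hcslope⟩ := exists_hasDerivAt_eq_slope U U' hgt
      (hUcont.mono (fun x hx => le_trans hi.1 hx.1))
      (fun x hx => hUderiv x ⟨lt_of_le_of_lt hi.1 hx.1, lt_of_lt_of_le hx.2 hb.2⟩)
    have hcK : c ∈ Ioo 0 K := ⟨lt_of_le_of_lt hi.1 hc.1, lt_of_lt_of_le hc.2 hb.2⟩
    have hslope : U b - U i = U' c * (b - i) := by
      rw [hcslope, div_mul_cancel₀ _ (sub_ne_zero.mpr hgt.ne')]
    have hkey : U' c < η := by
      rcases le_or_gt u0 η with hη0 | hη0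
      · exact lt_of_lt_of_le (U'_lt_u0 hU'anti hu0 hcK) hη0
      · rcases le_or_gt η uK with hηK | hKη
        · exfalso
          have hKeq : i = K := hIK η hη hηK
          have := hb.2; rw [hKeq] at hgt; linarith
        · have hipos : (0:ℝ) < i := by
            have h1 : I u0 < I η := hIanti ⟨hKη.le, hη0.le⟩ ⟨by linarith, le_refl _⟩ hη0
            have h2 : I u0 = 0 := hI0 u0 le_rfl
            linarith
          have hiKmem : i ∈ Ioo 0 K := ⟨hipos, lt_trans hc.1 hcK.2⟩
          have hU'i : U' i = η := hIinv η ⟨hKη, hη0⟩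
          have := hU'anti hiKmem hcK hc.1
          linarith
    nlinarith [mul_lt_mul_of_pos_right hkey (sub_pos.mpr hgt)]

/- STATEMENT 3 (inequality (6.18) and its equality condition): Let `(Ω,𝓕,P)` be
a probability space, `U` a good truncated utility function with effective
domain `[0,K]` and inverse marginal utility `I`, `H : Ω → (0,∞)` a random
variable with `E[H] < ∞`, and `y > 0`. Then for every measurable
`B : Ω → [0,K]` one has `E[U(B) − y·H·B] ≤ E[U(I(yH)) − y·H·I(yH)]`, with
equality iff `B = I(yH)` P-a.s. -/
theorem stmt_3
    {Ω : Type*} [MeasurableSpace Ω] (P : Measure Ω) [IsProbabilityMeasure P]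
    (K : ℝ) (hK : 0 < K)
    (U U' I : ℝ → ℝ) (u0 uK : ℝ)
    -- U is a good truncated utility function with effective domain [0,K]:
    (hUcont : ContinuousOn U (Ici 0))
    (hUderiv : ∀ x ∈ Ioo 0 K, HasDerivAt U (U' x) x)
    (hU'cont : ContinuousOn U' (Ioo 0 K))
    (hU'pos : ∀ x ∈ Ioo 0 K, 0 < U' x)
    (hU'anti : StrictAntiOn U' (Ioo 0 K))
    (hu0 : Tendsto U' (nhdsWithin 0 (Ioo 0 K)) (nhds u0))
    (huK : Tendsto U' (nhdsWithin K (Ioo 0 K)) (nhds uK))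
    (hUtrunc : ∀ x, K ≤ x → U x = U K)
    -- I : (0,∞) → [0,K] is the inverse marginal utility:
    (hIrange : ∀ y, 0 < y → I y ∈ Icc 0 K)
    (hI0 : ∀ y, u0 ≤ y → I y = 0)
    (hIK : ∀ y, 0 < y → y ≤ uK → I y = K)
    (hIinv : ∀ y ∈ Ioo uK u0, U' (I y) = y)
    (hIanti : StrictAntiOn I (Icc uK u0))
    (hIcont : ContinuousOn I (Ioi 0))
    -- H is a positive integrable random variable:
    (H : Ω → ℝ) (hHmeas : Measurable H) (hHpos : ∀ ω, 0 < H ω)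
    (hHint : Integrable H P)
    (y : ℝ) (hy : 0 < y)
    -- B is a measurable random variable with values in [0,K]:
    (B : Ω → ℝ) (hBmeas : Measurable B) (hBrange : ∀ ω, B ω ∈ Icc 0 K) :
    (∫ ω, (U (B ω) - y * H ω * B ω) ∂P
        ≤ ∫ ω, (U (I (y * H ω)) - y * H ω * I (y * H ω)) ∂P) ∧
    ((∫ ω, (U (B ω) - y * H ω * B ω) ∂P
        = ∫ ω, (U (I (y * H ω)) - y * H ω * I (y * H ω)) ∂P)
      ↔ B =ᵐ[P] fun ω => I (y * H ω)) := by
  have hηpos : ∀ ω, 0 < y * H ω := fun ω => mul_pos hy (hHpos ω)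
  have hYrange : ∀ ω, I (y * H ω) ∈ Icc 0 K := fun ω => hIrange _ (hηpos ω)
  -- measurability
  have hηmeas : Measurable fun ω => y * H ω := hHmeas.const_mul y
  have hYmeas : Measurable fun ω => I (y * H ω) := by
    have h1 : Continuous ((Ioi (0:ℝ)).restrict I) := hIcont.restrict
    have h2 : Measurable fun ω => (⟨y * H ω, hηpos ω⟩ : Ioi (0:ℝ)) :=
      hηmeas.subtype_mk
    exact h1.measurable.comp h2
  have hUcomp : ∀ {g : Ω → ℝ}, Measurable g → (∀ ω, 0 ≤ g ω) →
      Measurable fun ω => U (g ω) := by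
    intro g hg hg0
    have h1 : Continuous ((Ici (0:ℝ)).restrict U) := hUcont.restrict
    have h2 : Measurable fun ω => (⟨g ω, hg0 ω⟩ : Ici (0:ℝ)) := hg.subtype_mk
    exact h1.measurable.comp h2
  have hUB : Measurable fun ω => U (B ω) := hUcomp hBmeas fun ω => (hBrange ω).1
  have hUY : Measurable fun ω => U (I (y * H ω)) :=
    hUcomp hYmeas fun ω => (hYrange ω).1
  -- integrability
  obtain ⟨M, hM⟩ := (isCompact_Icc (a := (0:ℝ)) (b := K)).exists_bound_of_continuousOn
    (hUcont.mono (fun x hx => hx.1))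
  have hUint : ∀ {g : Ω → ℝ}, Measurable g → (∀ ω, g ω ∈ Icc 0 K) →
      Integrable (fun ω => U (g ω)) P := by
    intro g hg hgr
    refine (integrable_const M).mono' (hUcomp hg fun ω => (hgr ω).1).aestronglyMeasurable ?_
    exact ae_of_all _ fun ω => hM _ (hgr ω)
  have hmulint : ∀ {g : Ω → ℝ}, Measurable g → (∀ ω, g ω ∈ Icc 0 K) →
      Integrable (fun ω => y * H ω * g ω) P := by
    intro g hg hgr
    refine (hHint.const_mul (y * K)).mono' (hηmeas.mul hg).aestronglyMeasurable ?_
    refine ae_of_all _ fun ω => ?_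
    have h1 := (hgr ω).1; have h2 := (hgr ω).2; have h3 := (hHpos ω).le
    rw [Real.norm_eq_abs, abs_of_nonneg (by positivity)]
    nlinarith [mul_nonneg (mul_nonneg hy.le h3) (sub_nonneg.mpr h2)]
  have hint1 : Integrable (fun ω => U (B ω) - y * H ω * B ω) P :=
    (hUint hBmeas hBrange).sub (hmulint hBmeas hBrange)
  have hint2 : Integrable (fun ω => U (I (y * H ω)) - y * H ω * I (y * H ω)) P :=
    (hUint hYmeas hYrange).sub (hmulint hYmeas hYrange)
  -- pointwise inequality
  have hpt : ∀ ω, U (B ω) - y * H ω * B ω ≤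
      U (I (y * H ω)) - y * H ω * I (y * H ω) := by
    intro ω
    rcases eq_or_ne (B ω) (I (y * H ω)) with heq | hne
    · rw [heq]
    · exact (key_strict hK hUcont hUderiv hU'anti hu0 huK hIrange hI0 hIK hIinv hIanti
        (hηpos ω) (hBrange ω) hne).le
  refine ⟨integral_mono hint1 hint2 hpt, ?_, ?_⟩
  · intro heq
    have hg : Integrable (fun ω => (U (I (y * H ω)) - y * H ω * I (y * H ω)) -
        (U (B ω) - y * H ω * B ω)) P := hint2.sub hint1
    have hzero : ∫ ω, ((U (I (y * H ω)) - y * H ω * I (y * H ω)) -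
        (U (B ω) - y * H ω * B ω)) ∂P = 0 := by
      rw [integral_sub hint2 hint1, heq, sub_self]
    have hae := (integral_eq_zero_iff_of_nonneg
      (fun ω => sub_nonneg.mpr (hpt ω)) hg).mp hzero
    filter_upwards [hae] with ω hω
    by_contra hne
    have := key_strict hK hUcont hUderiv hU'anti hu0 huK hIrange hI0 hIK hIinv hIanti
      (hηpos ω) (hBrange ω) hne
    have hω' : (U (I (y * H ω)) - y * H ω * I (y * H ω)) -
        (U (B ω) - y * H ω * B ω) = 0 := hω
    linarith
  · intro hae
    refine integral_congr_ae ?_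
    filter_upwards [hae] with ω hω
    rw [hω]
end

section
/- For all real numbers u and λ and every ε ∈ (0,1) one has δ(u + ελ) − δ(u) ≤ ε·δ^u(λ), where δ^u(λ) := −δ(u) if λ = −u and δ^u(λ) := δ(λ) otherwise. (Inequality (5.16).) -/
/- STATEMENT 6: For all real numbers u and λ and every ε ∈ (0,1) one has
`δ(u + ελ) − δ(u) ≤ ε·δ^u(λ)`, where `δ^u(λ) = −δ(u)` if `λ = −u` and
`δ^u(λ) = δ(λ)` otherwise. Here `δ` is the support function of `[0,1]`. -/
theorem stmt_6 (δ : ℝ → ℝ) (hδ : ∀ x : ℝ, δ x = if 0 ≤ x then 0 else -x)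
    (u l ε : ℝ) (hε : ε ∈ Set.Ioo (0 : ℝ) 1) :
    δ (u + ε * l) - δ u ≤ ε * (if l = -u then -δ u else δ l) := by
  obtain ⟨h0, h1⟩ := hε
  simp only [hδ]
  split_ifs <;> nlinarith
end

section
/- Let (E,ℰ,μ) be a finite measure space, g : E → (0,∞) a μ-integrable measurable function, and u, α : E → ℝ bounded measurable functions. For a bounded measurable λ : E → ℝ define δ^u(λ)(e) := −δ(u(e)) if λ(e) = −u(e) and δ^u(λ)(e) := δ(λ(e)) otherwise. Suppose that for every bounded measurable λ : E → ℝ one has ∫_E g(e)·[δ^u(λ)(e) + α(e)·λ(e)] μ(de) ≥ 0. Then for μ-almost every e ∈ E one has α(e) ∈ [0,1] and δ(u(e)) + α(e)·u(e) = 0. (The core analytic step, (5.23)–(5.24), in the proof of Theorem 5.2, which shows that the candidate pseudo-reinsurance policy α* is a true reinsurance policy satisfying the complementary slackness condition.) -/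
open Set MeasureTheory

/- STATEMENT 7 (steps (5.23)–(5.24) of Theorem 5.2): Let `(E,ℰ,μ)` be a finite
measure space, `g : E → (0,∞)` integrable, `u, α` bounded measurable. If for
every bounded measurable `λ` one has
`∫ g·[δ^u(λ) + α·λ] dμ ≥ 0`, where `δ^u(λ)(e) = −δ(u(e))` if `λ(e) = −u(e)` and
`δ(λ(e))` otherwise, then μ-a.e. `α(e) ∈ [0,1]` and `δ(u(e)) + α(e)·u(e) = 0`. -/
theorem stmt_7
    {E : Type*} [MeasurableSpace E] (μ : Measure E) [IsFiniteMeasure μ]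
    (δ : ℝ → ℝ) (hδ : ∀ x : ℝ, δ x = if 0 ≤ x then 0 else -x)
    (g : E → ℝ) (hgmeas : Measurable g) (hgpos : ∀ e, 0 < g e)
    (hgint : Integrable g μ)
    (u : E → ℝ) (humeas : Measurable u) (hubd : ∃ C, ∀ e, |u e| ≤ C)
    (α : E → ℝ) (hαmeas : Measurable α) (hαbd : ∃ C, ∀ e, |α e| ≤ C)
    (hpos : ∀ l : E → ℝ, Measurable l → (∃ C, ∀ e, |l e| ≤ C) →
      0 ≤ ∫ e, g e * ((if l e = -u e then -δ (u e) else δ (l e)) + α e * l e) ∂μ) :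
    ∀ᵐ e ∂μ, α e ∈ Icc (0 : ℝ) 1 ∧ δ (u e) + α e * u e = 0 := by
  obtain ⟨Cu, hCu⟩ := hubd
  obtain ⟨Cα, hCα⟩ := hαbd
  have hδm : Measurable δ := by
    have : δ = fun x => if 0 ≤ x then 0 else -x := funext hδ
    rw [this]
    exact Measurable.ite measurableSet_Ici measurable_const measurable_id.neg
  have hδabs : ∀ x : ℝ, |δ x| ≤ |x| := by
    intro x; rw [hδ]; split_ifs with h
    · simp
    · simp
  -- integrability helper
  have hint : ∀ f : E → ℝ, Measurable f → (∃ C, ∀ e, |f e| ≤ C) →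
      Integrable (fun e => g e * f e) μ := by
    rintro f hf ⟨C, hC⟩
    have := hgint.bdd_mul (c := C) hf.aestronglyMeasurable (Filter.Eventually.of_forall fun e => by simpa using hC e)
    simpa [mul_comm] using this
  -- integrability of the integrand appearing in hpos
  have hint2 : ∀ l : E → ℝ, Measurable l → ∀ Cl : ℝ, (∀ e, |l e| ≤ Cl) →
      Integrable (fun e =>
        g e * ((if l e = -u e then -δ (u e) else δ (l e)) + α e * l e)) μ := by
    intro l hlm Cl hCl
    apply hint
    · exact Measurable.add
        (Measurable.ite (measurableSet_eq_fun hlm humeas.neg)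
          ((hδm.comp humeas).neg) (hδm.comp hlm))
        (hαmeas.mul hlm)
    · refine ⟨Cu + Cl + Cα * Cl, fun e => ?_⟩
      have h1 : |if l e = -u e then -δ (u e) else δ (l e)| ≤ Cu + Cl := by
        split_ifs with h
        · rw [abs_neg]
          have := (hδabs (u e)).trans (hCu e)
          have h0 : (0:ℝ) ≤ Cl := (abs_nonneg _).trans (hCl e)
          linarith
        · have := (hδabs (l e)).trans (hCl e)
          have h0 : (0:ℝ) ≤ Cu := (abs_nonneg _).trans (hCu e)
          linarith
      have h2 : |α e * l e| ≤ Cα * Cl := by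
        rw [abs_mul]
        exact mul_le_mul (hCα e) (hCl e) (abs_nonneg _) ((abs_nonneg _).trans (hCα e))
      calc |_ + _| ≤ _ := abs_add_le _ _
        _ ≤ Cu + Cl + Cα * Cl := by linarith
  -- derived inequality without the exceptional case
  have hpos' : ∀ l : E → ℝ, Measurable l → ∀ Cl : ℝ, (∀ e, |l e| ≤ Cl) →
      0 ≤ ∫ e, g e * (δ (l e) + α e * l e) ∂μ := by
    intro l hlm Cl hCl
    refine (hpos l hlm ⟨Cl, hCl⟩).trans (integral_mono (hint2 l hlm Cl hCl) ?_ ?_)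
    · exact hint _ ((hδm.comp hlm).add (hαmeas.mul hlm))
        ⟨Cl + Cα * Cl, fun e => by
          have h1 := (hδabs (l e)).trans (hCl e)
          have h2 : |α e * l e| ≤ Cα * Cl := by
            rw [abs_mul]
            exact mul_le_mul (hCα e) (hCl e) (abs_nonneg _) ((abs_nonneg _).trans (hCα e))
          calc |δ (l e) + α e * l e| ≤ _ := abs_add_le _ _
            _ ≤ Cl + Cα * Cl := by linarith⟩
    · intro e
      apply mul_le_mul_of_nonneg_left _ (hgpos e).le
      apply add_le_add_left
      split_ifs with h
      · rw [h, hδ, hδ]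
        split_ifs <;> linarith
      · exact le_rfl
  -- Step 1: α ≥ 0 a.e.
  have ha0 : ∀ᵐ e ∂μ, 0 ≤ α e := by
    set l : E → ℝ := fun e => if α e < 0 then 1 else 0 with hl
    have hlm : Measurable l :=
      Measurable.ite (measurableSet_lt hαmeas measurable_const) measurable_const
        measurable_const
    have hlbd : ∀ e, |l e| ≤ 1 := by
      intro e; simp only [hl]; split_ifs <;> simp
    have key := hpos' l hlm 1 hlbd
    set f : E → ℝ := fun e => g e * (if α e < 0 then α e else 0) with hf
    have hfi : Integrable f μ := hint _
      (Measurable.ite (measurableSet_lt hαmeas measurable_const) hαmeas measurable_const)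
      ⟨Cα, fun e => by
        show |if α e < 0 then α e else 0| ≤ Cα
        split_ifs
        · exact hCα e
        · simpa using (abs_nonneg (α e)).trans (hCα e)⟩
    have hle : 0 ≤ ∫ e, f e ∂μ := by
      refine key.trans (le_of_eq (integral_congr_ae (Filter.Eventually.of_forall ?_)))
      intro e
      simp only [hf, hl]
      split_ifs with h1
      · rw [hδ]; norm_num
      · rw [hδ]; norm_num
    have hnn' : 0 ≤ fun e => -f e := by
      intro e
      simp only [hf, Pi.zero_apply, neg_nonneg]
      split_ifs with h
      · exact mul_nonpos_of_nonneg_of_nonpos (hgpos e).le h.le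
      · simp
    have hzero : ∫ e, (fun e => -f e) e ∂μ = 0 := by
      have hge : ∫ e, f e ∂μ ≤ 0 := by
        apply integral_nonpos
        intro e
        simpa using hnn' e
      rw [integral_neg]; linarith
    have hae := (integral_eq_zero_iff_of_nonneg hnn' hfi.neg).1 hzero
    filter_upwards [hae] with e he
    simp only [Pi.zero_apply, neg_eq_zero, hf] at he
    by_contra hc
    push_neg at hc
    rw [if_pos hc] at he
    rcases mul_eq_zero.1 he with h | h
    · exact absurd h (hgpos e).ne'
    · exact absurd h hc.ne
  -- Step 2: α ≤ 1 a.e.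
  have ha1 : ∀ᵐ e ∂μ, α e ≤ 1 := by
    set l : E → ℝ := fun e => if 1 < α e then -1 else 0 with hl
    have hlm : Measurable l :=
      Measurable.ite (measurableSet_lt measurable_const hαmeas) measurable_const
        measurable_const
    have hlbd : ∀ e, |l e| ≤ 1 := by
      intro e; simp only [hl]; split_ifs <;> simp
    have key := hpos' l hlm 1 hlbd
    set f : E → ℝ := fun e => g e * (if 1 < α e then 1 - α e else 0) with hf
    have hfi : Integrable f μ := hint _
      (Measurable.ite (measurableSet_lt measurable_const hαmeas)
        (measurable_const.sub hαmeas) measurable_const)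
      ⟨1 + Cα, fun e => by
        show |if 1 < α e then 1 - α e else 0| ≤ 1 + Cα
        split_ifs
        · calc |1 - α e| ≤ |(1:ℝ)| + |α e| := abs_sub _ _
            _ ≤ 1 + Cα := by simp [hCα e]
        · have : (0:ℝ) ≤ Cα := (abs_nonneg _).trans (hCα e)
          simp; linarith⟩
    have hle : 0 ≤ ∫ e, f e ∂μ := by
      refine key.trans (le_of_eq (integral_congr_ae (Filter.Eventually.of_forall ?_)))
      intro e
      simp only [hf, hl]
      split_ifs with h1
      · rw [hδ, if_neg (by norm_num : ¬(0:ℝ) ≤ -1)]; ring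
      · rw [hδ]; norm_num
    have hnn' : 0 ≤ fun e => -f e := by
      intro e
      simp only [hf, Pi.zero_apply, neg_nonneg]
      split_ifs with h
      · exact mul_nonpos_of_nonneg_of_nonpos (hgpos e).le (by linarith)
      · simp
    have hzero : ∫ e, (fun e => -f e) e ∂μ = 0 := by
      have hge : ∫ e, f e ∂μ ≤ 0 := by
        apply integral_nonpos
        intro e
        simpa using hnn' e
      rw [integral_neg]; linarith
    have hae := (integral_eq_zero_iff_of_nonneg hnn' hfi.neg).1 hzero
    filter_upwards [hae] with e he
    simp only [Pi.zero_apply, neg_eq_zero, hf] at he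
    by_contra hc
    push_neg at hc
    rw [if_pos hc] at he
    rcases mul_eq_zero.1 he with h | h
    · exact absurd h (hgpos e).ne'
    · exact absurd h (by linarith)
  -- Step 3: complementary slackness
  set h : E → ℝ := fun e => g e * (δ (u e) + α e * u e) with hh
  have hhi : Integrable h μ := hint _
    ((hδm.comp humeas).add (hαmeas.mul humeas))
    ⟨Cu + Cα * Cu, fun e => by
      have h1 := (hδabs (u e)).trans (hCu e)
      have h2 : |α e * u e| ≤ Cα * Cu := by
        rw [abs_mul]
        exact mul_le_mul (hCα e) (hCu e) (abs_nonneg _) ((abs_nonneg _).trans (hCα e))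
      calc |δ (u e) + α e * u e| ≤ _ := abs_add_le _ _
        _ ≤ Cu + Cα * Cu := by linarith⟩
  have hnn : ∀ᵐ e ∂μ, 0 ≤ h e := by
    filter_upwards [ha0, ha1] with e h0 h1
    apply mul_nonneg (hgpos e).le
    rw [hδ]
    split_ifs with hu
    · nlinarith
    · nlinarith
  have hle0 : ∫ e, h e ∂μ ≤ 0 := by
    have key := hpos (fun e => -u e) humeas.neg ⟨Cu, fun e => by simpa using hCu e⟩
    simp only [eq_self_iff_true, if_true] at key
    have heq : ∫ e, g e * (-δ (u e) + α e * -u e) ∂μ = -∫ e, h e ∂μ := by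
      rw [← integral_neg]
      apply integral_congr_ae (Filter.Eventually.of_forall ?_)
      intro e; simp only [hh]; ring
    rw [heq] at key
    linarith
  have hzero : ∫ e, h e ∂μ = 0 :=
    le_antisymm hle0 (integral_nonneg_of_ae hnn)
  have hae : h =ᵐ[μ] 0 :=
    (integral_eq_zero_iff_of_nonneg_ae hnn hhi).1 hzero
  filter_upwards [ha0, ha1, hae] with e h0 h1 he
  refine ⟨⟨h0, h1⟩, ?_⟩
  simp only [Pi.zero_apply, hh] at he
  rcases mul_eq_zero.1 he with hg0 | hz
  · exact absurd hg0 (hgpos e).ne'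
  · exact hz
end

section
/- Let (Ω,𝓕,P) be a probability space, T > 0, K > 0, and let H : [0,T]×Ω → (0,∞) be jointly measurable, with H_t := H(t,·) and H_T := H(T,·), such that E[H_T] < ∞. Let x̄₁ : [0,T] → [0,∞) be measurable with E∫₀^T H_t·x̄₁(t) dt < ∞. Let I₁ : [0,T]×(0,∞) → [0,∞) be measurable, such that for each t the map y ↦ I₁(t,y) is continuous and nonincreasing with lim_{y→0+} I₁(t,y) = +∞ and lim_{y→∞} I₁(t,y) = x̄₁(t); let I₂ : (0,∞) → [0,K] be continuous and nonincreasing with lim_{y→∞} I₂(y) = 0. Define 𝒳(y) := E[H_T·I₂(y·H_T)] + E∫₀^T H_t·I₁(t, y·H_t) dt for y > 0, and assume 𝒳(y) < ∞ for every y > 0. Then 𝒳 is nonincreasing and continuous on (0,∞), lim_{y→0+} 𝒳(y) = +∞, and lim_{y→∞} 𝒳(y) = E∫₀^T H_t·x̄₁(t) dt. (The properties (6.10)–(6.11) of the function 𝒳, which guarantee that for every x > lim_{y→∞}𝒳(y) there exists y > 0 with 𝒳(y) = x, defining the Lagrange multiplier 𝒴(x) in the utility optimization problem.) -/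
open Set Filter MeasureTheory

/- STATEMENT 12 (properties (6.10)–(6.11) of the function 𝒳):
`𝒳(y) = E[H_T·I₂(y·H_T)] + E∫₀^T H_t·I₁(t, y·H_t) dt` is nonincreasing and
continuous on `(0,∞)`, tends to `+∞` as `y → 0+`, and tends to
`E∫₀^T H_t·x̄₁(t) dt` as `y → ∞`. -/
theorem stmt_12
    {Ω : Type*} [MeasurableSpace Ω] (P : Measure Ω) [IsProbabilityMeasure P]
    (T K : ℝ) (hT : 0 < T) (hK : 0 < K)
    -- H : [0,T] × Ω → (0,∞) jointly measurable, E[H_T] < ∞: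
    (H : ℝ → Ω → ℝ) (hHmeas : Measurable fun p : ℝ × Ω => H p.1 p.2)
    (hHpos : ∀ t ω, 0 < H t ω)
    (hHTint : Integrable (H T) P)
    -- x̄₁ : [0,T] → [0,∞) measurable with E∫₀^T H_t·x̄₁(t) dt < ∞:
    (xb : ℝ → ℝ) (hxbmeas : Measurable xb) (hxbnonneg : ∀ t, 0 ≤ xb t)
    (hxbfin : ∫⁻ ω, (∫⁻ t in Icc (0 : ℝ) T, ENNReal.ofReal (H t ω * xb t)) ∂P ≠ ⊤)
    -- I₁ : [0,T] × (0,∞) → [0,∞):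
    (I₁ : ℝ → ℝ → ℝ) (hI₁meas : Measurable fun p : ℝ × ℝ => I₁ p.1 p.2)
    (hI₁nonneg : ∀ t y, 0 < y → 0 ≤ I₁ t y)
    (hI₁cont : ∀ t, ContinuousOn (I₁ t) (Ioi 0))
    (hI₁anti : ∀ t, AntitoneOn (I₁ t) (Ioi 0))
    (hI₁zero : ∀ t, Tendsto (I₁ t) (nhdsWithin 0 (Ioi 0)) atTop)
    (hI₁top : ∀ t, Tendsto (I₁ t) atTop (nhds (xb t)))
    -- I₂ : (0,∞) → [0,K]:
    (I₂ : ℝ → ℝ) (hI₂meas : Measurable I₂)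
    (hI₂range : ∀ y, 0 < y → I₂ y ∈ Icc 0 K)
    (hI₂cont : ContinuousOn I₂ (Ioi 0))
    (hI₂anti : AntitoneOn I₂ (Ioi 0))
    (hI₂top : Tendsto I₂ atTop (nhds 0))
    -- the function 𝒳, assumed finite for every y > 0:
    (X : ℝ → ℝ)
    (hX : ∀ y : ℝ, 0 < y → X y =
      (∫⁻ ω, ENNReal.ofReal (H T ω * I₂ (y * H T ω)) ∂P
        + ∫⁻ ω, (∫⁻ t in Icc (0 : ℝ) T,
            ENNReal.ofReal (H t ω * I₁ t (y * H t ω))) ∂P).toReal)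
    (hXfin : ∀ y : ℝ, 0 < y →
      ∫⁻ ω, (∫⁻ t in Icc (0 : ℝ) T,
        ENNReal.ofReal (H t ω * I₁ t (y * H t ω))) ∂P ≠ ⊤) :
    -- conclusions:
    AntitoneOn X (Ioi 0) ∧
    ContinuousOn X (Ioi 0) ∧
    Tendsto X (nhdsWithin 0 (Ioi 0)) atTop ∧
    Tendsto X atTop
      (nhds ((∫⁻ ω, (∫⁻ t in Icc (0 : ℝ) T,
          ENNReal.ofReal (H t ω * xb t)) ∂P).toReal)) := by
  -- Abbreviations
  set A : ℝ → ENNReal := fun y => ∫⁻ ω, ENNReal.ofReal (H T ω * I₂ (y * H T ω)) ∂P with hAdef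
  set G : ℝ → Ω → ENNReal := fun y ω => ∫⁻ t in Icc (0 : ℝ) T,
      ENNReal.ofReal (H t ω * I₁ t (y * H t ω)) with hGdef
  set B : ℝ → ENNReal := fun y => ∫⁻ ω, G y ω ∂P with hBdef
  have hXeq : ∀ y : ℝ, 0 < y → X y = (A y + B y).toReal := hX
  have hBfin : ∀ y : ℝ, 0 < y → B y ≠ ⊤ := hXfin
  -- basic measurability
  have hHT : Measurable (H T) := hHmeas.comp (measurable_const.prodMk measurable_id)
  have hHt : ∀ ω, Measurable fun t => H t ω :=
    fun ω => hHmeas.comp (measurable_id.prodMk measurable_const)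
  have hAintmeas : ∀ y : ℝ, Measurable fun ω => ENNReal.ofReal (H T ω * I₂ (y * H T ω)) :=
    fun y => ENNReal.measurable_ofReal.comp
      (hHT.mul (hI₂meas.comp (measurable_const.mul hHT)))
  have hGjoint : ∀ y : ℝ, Measurable fun p : Ω × ℝ =>
      ENNReal.ofReal (H p.2 p.1 * I₁ p.2 (y * H p.2 p.1)) := by
    intro y
    have hH' : Measurable fun p : Ω × ℝ => H p.2 p.1 := hHmeas.comp measurable_swap
    exact ENNReal.measurable_ofReal.comp
      (hH'.mul (hI₁meas.comp (measurable_snd.prodMk (measurable_const.mul hH'))))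
  have hGtmeas : ∀ y : ℝ, ∀ ω, Measurable fun t => ENNReal.ofReal (H t ω * I₁ t (y * H t ω)) := by
    intro y ω
    exact ENNReal.measurable_ofReal.comp
      ((hHt ω).mul ((hI₁meas.comp (measurable_id.prodMk ((hHt ω).const_mul y)))))
  have hGmeas : ∀ y : ℝ, Measurable (G y) := fun y => (hGjoint y).lintegral_prod_right'
  -- pointwise monotonicity
  have hGptmono : ∀ ⦃y₁ y₂ : ℝ⦄, 0 < y₁ → y₁ ≤ y₂ → ∀ t ω,
      ENNReal.ofReal (H t ω * I₁ t (y₂ * H t ω)) ≤ ENNReal.ofReal (H t ω * I₁ t (y₁ * H t ω)) := by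
    intro y₁ y₂ h₁ h ω t
    refine ENNReal.ofReal_le_ofReal (mul_le_mul_of_nonneg_left ?_ (hHpos _ _).le)
    exact hI₁anti _ (mem_Ioi.2 (mul_pos h₁ (hHpos _ _)))
      (mem_Ioi.2 (mul_pos (h₁.trans_le h) (hHpos _ _)))
      (mul_le_mul_of_nonneg_right h (hHpos _ _).le)
  have hGmono : ∀ ⦃y₁ y₂ : ℝ⦄, 0 < y₁ → y₁ ≤ y₂ → ∀ ω, G y₂ ω ≤ G y₁ ω :=
    fun y₁ y₂ h₁ h ω => lintegral_mono fun t => hGptmono h₁ h t ω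
  have hAmono : ∀ ⦃y₁ y₂ : ℝ⦄, 0 < y₁ → y₁ ≤ y₂ → A y₂ ≤ A y₁ := by
    intro y₁ y₂ h₁ h
    refine lintegral_mono fun ω => ?_
    refine ENNReal.ofReal_le_ofReal (mul_le_mul_of_nonneg_left ?_ (hHpos _ _).le)
    exact hI₂anti (mem_Ioi.2 (mul_pos h₁ (hHpos _ _)))
      (mem_Ioi.2 (mul_pos (h₁.trans_le h) (hHpos _ _)))
      (mul_le_mul_of_nonneg_right h (hHpos _ _).le)
  -- finiteness of A
  have hbound2fin : ∫⁻ ω, ENNReal.ofReal K * ENNReal.ofReal (H T ω) ∂P ≠ ⊤ := by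
    rw [lintegral_const_mul' _ _ ENNReal.ofReal_ne_top]
    exact ENNReal.mul_ne_top ENNReal.ofReal_ne_top hHTint.lintegral_lt_top.ne
  have hAle : ∀ y : ℝ, 0 < y → ∀ ω,
      ENNReal.ofReal (H T ω * I₂ (y * H T ω)) ≤ ENNReal.ofReal K * ENNReal.ofReal (H T ω) := by
    intro y hy ω
    rw [← ENNReal.ofReal_mul hK.le]
    refine ENNReal.ofReal_le_ofReal ?_
    have h2 := (hI₂range _ (mul_pos hy (hHpos T ω))).2
    nlinarith [(hHpos T ω).le]
  have hAfin : ∀ y : ℝ, 0 < y → A y ≠ ⊤ := by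
    intro y hy
    exact ne_top_of_le_ne_top hbound2fin (lintegral_mono (hAle y hy))
  -- Antitone
  have hXanti : AntitoneOn X (Ioi 0) := by
    intro y₁ h₁ y₂ h₂ h
    rw [hXeq y₁ h₁, hXeq y₂ h₂]
    refine ENNReal.toReal_mono (ENNReal.add_ne_top.2 ⟨hAfin _ h₁, hBfin _ h₁⟩) ?_
    exact add_le_add (hAmono h₁ h) (lintegral_mono fun ω => hGmono h₁ h ω)
  refine ⟨hXanti, ?_, ?_, ?_⟩
  · -- Continuity
    have key : ∀ y₀ ∈ Ioi (0:ℝ), Tendsto (fun y => (A y + B y).toReal)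
        (nhdsWithin y₀ (Ioi 0)) (nhds ((A y₀ + B y₀).toReal)) := by
      intro y₀ hy₀
      rw [mem_Ioi] at hy₀
      have hhalf : (0:ℝ) < y₀ / 2 := by linarith
      have hev : ∀ᶠ y in nhdsWithin y₀ (Ioi 0), y₀ / 2 < y ∧ 0 < y := by
        filter_upwards [self_mem_nhdsWithin,
          eventually_nhdsWithin_of_eventually_nhds (eventually_gt_nhds (by linarith : y₀/2 < y₀))]
          with y h1 h2
        exact ⟨h2, h1⟩
      -- convergence of A
      have hAt : Tendsto A (nhdsWithin y₀ (Ioi 0)) (nhds (A y₀)) := by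
        refine tendsto_lintegral_filter_of_dominated_convergence
          (fun ω => ENNReal.ofReal K * ENNReal.ofReal (H T ω))
          (Eventually.of_forall hAintmeas) ?_ hbound2fin ?_
        · filter_upwards [hev] with y hy
          exact Eventually.of_forall (hAle y hy.2)
        · refine Eventually.of_forall fun ω => ?_
          have h1 : Tendsto (fun y : ℝ => y * H T ω) (nhdsWithin y₀ (Ioi 0))
              (nhdsWithin (y₀ * H T ω) (Ioi 0)) := by
            refine tendsto_nhdsWithin_of_tendsto_nhds_of_eventually_within _
              (((continuous_id.mul continuous_const).tendsto y₀).mono_left nhdsWithin_le_nhds) ?_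
            filter_upwards [self_mem_nhdsWithin] with y hy
            exact mem_Ioi.2 (mul_pos (mem_Ioi.1 hy) (hHpos T ω))
          have h2 : Tendsto (fun y : ℝ => I₂ (y * H T ω)) (nhdsWithin y₀ (Ioi 0))
              (nhds (I₂ (y₀ * H T ω))) :=
            (hI₂cont _ (mem_Ioi.2 (mul_pos hy₀ (hHpos T ω)))).tendsto.comp h1
          exact (ENNReal.continuous_ofReal.tendsto _).comp (tendsto_const_nhds.mul h2)
      -- convergence of B
      have hBt : Tendsto B (nhdsWithin y₀ (Ioi 0)) (nhds (B y₀)) := by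
        refine tendsto_lintegral_filter_of_dominated_convergence (G (y₀ / 2))
          (Eventually.of_forall hGmeas) ?_ (hBfin _ hhalf) ?_
        · filter_upwards [hev] with y hy
          exact Eventually.of_forall fun ω => hGmono hhalf hy.1.le ω
        · have hfinae : ∀ᵐ ω ∂P, G (y₀ / 2) ω ≠ ⊤ :=
            (ae_lt_top (hGmeas _) (hBfin _ hhalf)).mono fun ω h => h.ne
          filter_upwards [hfinae] with ω hfin
          refine tendsto_lintegral_filter_of_dominated_convergence
            (fun t => ENNReal.ofReal (H t ω * I₁ t (y₀ / 2 * H t ω)))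
            (Eventually.of_forall fun y => hGtmeas y ω) ?_ hfin ?_
          · filter_upwards [hev] with y hy
            exact Eventually.of_forall fun t => hGptmono hhalf hy.1.le t ω
          · refine Eventually.of_forall fun t => ?_
            have h1 : Tendsto (fun y : ℝ => y * H t ω) (nhdsWithin y₀ (Ioi 0))
                (nhdsWithin (y₀ * H t ω) (Ioi 0)) := by
              refine tendsto_nhdsWithin_of_tendsto_nhds_of_eventually_within _
                (((continuous_id.mul continuous_const).tendsto y₀).mono_left nhdsWithin_le_nhds) ?_
              filter_upwards [self_mem_nhdsWithin] with y hy
              exact mem_Ioi.2 (mul_pos (mem_Ioi.1 hy) (hHpos t ω))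
            have h2 : Tendsto (fun y : ℝ => I₁ t (y * H t ω)) (nhdsWithin y₀ (Ioi 0))
                (nhds (I₁ t (y₀ * H t ω))) :=
              ((hI₁cont t) _ (mem_Ioi.2 (mul_pos hy₀ (hHpos t ω)))).tendsto.comp h1
            exact (ENNReal.continuous_ofReal.tendsto _).comp (tendsto_const_nhds.mul h2)
      exact (ENNReal.tendsto_toReal
        (ENNReal.add_ne_top.2 ⟨hAfin _ hy₀, hBfin _ hy₀⟩)).comp (hAt.add hBt)
    have hg : ContinuousOn (fun y => (A y + B y).toReal) (Ioi 0) := by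
      intro y₀ hy₀
      exact key y₀ hy₀
    exact hg.congr fun y hy => hXeq y (mem_Ioi.1 hy)
  · -- limit at 0+
    rw [tendsto_atTop]
    intro C
    -- B (1/(n+1)) → ⊤
    have hseq : Tendsto (fun n : ℕ => (1:ℝ) / (n + 1)) atTop (nhdsWithin 0 (Ioi 0)) := by
      refine tendsto_nhdsWithin_of_tendsto_nhds_of_eventually_within _
        tendsto_one_div_add_atTop_nhds_zero_nat ?_
      exact Eventually.of_forall fun n => mem_Ioi.2 (by positivity)
    have hseqanti : ∀ n m : ℕ, n ≤ m → (1:ℝ) / (m + 1) ≤ 1 / (n + 1) := by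
      intro n m h
      apply one_div_le_one_div_of_le (by positivity)
      have : (n : ℝ) ≤ m := Nat.cast_le.2 h
      linarith
    have hGinner : ∀ ω, Tendsto (fun n : ℕ => G (1 / (n + 1)) ω) atTop (nhds ⊤) := by
      intro ω
      have := lintegral_tendsto_of_tendsto_of_monotone
        (μ := volume.restrict (Icc (0:ℝ) T))
        (f := fun n t => ENNReal.ofReal (H t ω * I₁ t (1 / (n + 1) * H t ω)))
        (F := fun _ => ⊤)
        (fun n => (hGtmeas _ ω).aemeasurable)
        (Eventually.of_forall fun t => by
          intro n m h
          exact hGptmono (by positivity) (hseqanti n m h) t ω)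
        (Eventually.of_forall fun t => by
          have h1 : Tendsto (fun n : ℕ => 1 / (n + 1 : ℝ) * H t ω) atTop
              (nhdsWithin 0 (Ioi 0)) := by
            refine tendsto_nhdsWithin_of_tendsto_nhds_of_eventually_within _ ?_
              (Eventually.of_forall fun n =>
                mem_Ioi.2 (mul_pos (by positivity) (hHpos t ω)))
            simpa using tendsto_one_div_add_atTop_nhds_zero_nat.mul_const (H t ω)
          have h2 : Tendsto (fun n : ℕ => I₁ t (1 / (n + 1 : ℝ) * H t ω)) atTop atTop :=
            (hI₁zero t).comp h1
          have h3 : Tendsto (fun n : ℕ => H t ω * I₁ t (1 / (n + 1 : ℝ) * H t ω)) atTop atTop :=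
            h2.const_mul_atTop (hHpos t ω)
          exact ENNReal.tendsto_ofReal_atTop.comp h3)
      have hvol : (∫⁻ _t in Icc (0:ℝ) T, (⊤:ENNReal)) = ⊤ := by
        rw [lintegral_const, Measure.restrict_apply_univ, Real.volume_Icc]
        exact ENNReal.top_mul (by simp [ENNReal.ofReal_eq_zero]; linarith)
      rw [hvol] at this
      exact this
    have hBtop : Tendsto (fun n : ℕ => B (1 / (n + 1))) atTop (nhds ⊤) := by
      have := lintegral_tendsto_of_tendsto_of_monotone (μ := P)
        (f := fun n ω => G (1 / (n + 1)) ω) (F := fun _ => ⊤)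
        (fun n => (hGmeas _).aemeasurable)
        (Eventually.of_forall fun ω n m h => hGmono (by positivity) (hseqanti n m h) ω)
        (Eventually.of_forall hGinner)
      simpa [lintegral_const] using this
    have : ∀ᶠ n : ℕ in atTop, ENNReal.ofReal C < B (1 / (n + 1)) :=
      hBtop.eventually (eventually_gt_nhds (by simp : ENNReal.ofReal C < ⊤))
    obtain ⟨n, hn⟩ := this.exists
    have hy₀pos : (0:ℝ) < 1 / (n + 1) := by positivity
    have hCX : C ≤ X (1 / (n + 1)) := by
      rw [hXeq _ hy₀pos]
      have hC0 : C ≤ (ENNReal.ofReal C).toReal := by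
        rcases le_or_gt C 0 with h | h
        · simp [ENNReal.ofReal_eq_zero.2 h]; exact h
        · rw [ENNReal.toReal_ofReal h.le]
      refine hC0.trans ?_
      refine ENNReal.toReal_mono (ENNReal.add_ne_top.2 ⟨hAfin _ hy₀pos, hBfin _ hy₀pos⟩) ?_
      exact hn.le.trans le_add_self
    filter_upwards [self_mem_nhdsWithin,
      eventually_nhdsWithin_of_eventually_nhds (eventually_lt_nhds hy₀pos)] with y hy hlt
    exact hCX.trans (hXanti hy (mem_Ioi.2 hy₀pos) hlt.le)
  · -- limit at ∞
    have hAinf : Tendsto A atTop (nhds 0) := by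
      have := tendsto_lintegral_filter_of_dominated_convergence (μ := P) (l := atTop)
        (F := fun y ω => ENNReal.ofReal (H T ω * I₂ (y * H T ω)))
        (f := fun _ => 0)
        (fun ω => ENNReal.ofReal K * ENNReal.ofReal (H T ω))
        (Eventually.of_forall hAintmeas)
        (by
          filter_upwards [eventually_gt_atTop (0:ℝ)] with y hy
          exact Eventually.of_forall (hAle y hy))
        hbound2fin
        (Eventually.of_forall fun ω => by
          have h1 : Tendsto (fun y : ℝ => y * H T ω) atTop atTop :=
            tendsto_id.atTop_mul_const (hHpos T ω)
          have h2 : Tendsto (fun y : ℝ => I₂ (y * H T ω)) atTop (nhds 0) := hI₂top.comp h1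
          have h3 : Tendsto (fun y : ℝ => H T ω * I₂ (y * H T ω)) atTop (nhds 0) := by
            simpa using tendsto_const_nhds.mul h2
          simpa [Function.comp_def] using (ENNReal.continuous_ofReal.tendsto 0).comp h3)
      simpa using this
    set L : ENNReal := ∫⁻ ω, (∫⁻ t in Icc (0 : ℝ) T, ENNReal.ofReal (H t ω * xb t)) ∂P with hLdef
    have hBinf : Tendsto B atTop (nhds L) := by
      refine tendsto_lintegral_filter_of_dominated_convergence (G 1)
        (Eventually.of_forall hGmeas) ?_ (hBfin 1 one_pos) ?_
      · filter_upwards [eventually_ge_atTop (1:ℝ)] with y hy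
        exact Eventually.of_forall fun ω => hGmono one_pos hy ω
      · have hfinae : ∀ᵐ ω ∂P, G 1 ω ≠ ⊤ :=
          (ae_lt_top (hGmeas _) (hBfin 1 one_pos)).mono fun ω h => h.ne
        filter_upwards [hfinae] with ω hfin
        refine tendsto_lintegral_filter_of_dominated_convergence
          (fun t => ENNReal.ofReal (H t ω * I₁ t (1 * H t ω)))
          (Eventually.of_forall fun y => hGtmeas y ω) ?_ hfin ?_
        · filter_upwards [eventually_ge_atTop (1:ℝ)] with y hy
          exact Eventually.of_forall fun t => hGptmono one_pos hy t ω
        · refine Eventually.of_forall fun t => ?_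
          have h1 : Tendsto (fun y : ℝ => y * H t ω) atTop atTop :=
            tendsto_id.atTop_mul_const (hHpos t ω)
          have h2 : Tendsto (fun y : ℝ => I₁ t (y * H t ω)) atTop (nhds (xb t)) :=
            (hI₁top t).comp h1
          exact (ENNReal.continuous_ofReal.tendsto _).comp (tendsto_const_nhds.mul h2)
    have hsum : Tendsto (fun y => A y + B y) atTop (nhds (0 + L)) :=
      hAinf.add hBinf
    rw [zero_add] at hsum
    have hfinal : Tendsto (fun y => (A y + B y).toReal) atTop (nhds L.toReal) :=
      (ENNReal.tendsto_toReal hxbfin).comp hsum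
    refine hfinal.congr' ?_
    filter_upwards [eventually_gt_atTop (0:ℝ)] with y hy
    exact (hXeq y hy).symm
end
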